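/- There exists C > 0, depending only on the Schottky data, such that for every h ∈ (0,1], every ν ∈ [0,1/2], setting s := 1/2 − ν + i/h, every partition Z, and every function u continuous on D, holomorphic on the interior of D, and satisfying L_s u = u on the interior of D: sup over x ∈ I of |u(x)| ≤ C · Σ_{a ∈ Z} (sup over x ∈ I'_{ā} of |u(x)|). -/

import Mathlib

open Complex MeasureTheory Metric Set
open scoped Real

noncomputable section


abbrev SL2R := Matrix.SpecialLinearGroup (Fin 2) ℝ

/-- Entries of a matrix in `SL(2,ℝ)`, as complex numbers. -/
def mA (g : SL2R) : ℂ := ((g.1 0 0 : ℝ) : ℂ)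
def mB (g : SL2R) : ℂ := ((g.1 0 1 : ℝ) : ℂ)
def mC (g : SL2R) : ℂ := ((g.1 1 0 : ℝ) : ℂ)
def mD (g : SL2R) : ℂ := ((g.1 1 1 : ℝ) : ℂ)

/-- The Möbius action of `SL(2,ℝ)` on the Riemann sphere `ℂ ∪ {∞}`. -/
def moebius (g : SL2R) : OnePoint ℂ → OnePoint ℂ := fun z =>
  match z with
  | OnePoint.infty => if mC g = 0 then OnePoint.infty else ((mA g / mC g : ℂ) : OnePoint ℂ)
  | (w : ℂ) => if mC g * w + mD g = 0 then OnePoint.infty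
      else (((mA g * w + mB g) / (mC g * w + mD g) : ℂ) : OnePoint ℂ)

/-- The Möbius action on `ℂ`, with junk value at the pole. -/
def moebiusC (g : SL2R) (z : ℂ) : ℂ := (mA g * z + mB g) / (mC g * z + mD g)

/-- The Möbius action on `ℝ`, with junk value at the pole. -/
def moebiusR (g : SL2R) (x : ℝ) : ℝ :=
  (g.1 0 0 * x + g.1 0 1) / (g.1 1 0 * x + g.1 1 1)

/-- The complex derivative `γ'(z) = (cz+d)⁻²` of a Möbius transformation (`det = 1`). -/
def dMob (g : SL2R) (z : ℂ) : ℂ := ((mC g * z + mD g)⁻¹) ^ 2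

/-- The involution `a ↦ ā` on the alphabet `{1, …, 2r}` (as `Fin (2*r)`). -/
def bar {r : ℕ} (a : Fin (2 * r)) : Fin (2 * r) :=
  if h : (a : ℕ) < r then ⟨(a : ℕ) + r, by omega⟩
  else ⟨(a : ℕ) - r, by have := a.isLt; omega⟩

/-- Schottky data: `2r` pairwise disjoint closed disks centered on the real axis and
`2r` elements of `SL(2,ℝ)` with `γ_a((ℂ∪{∞}) \ interior D_{ā}) = D_a`, `γ_ā = γ_a⁻¹`. -/
structure Schottky (r : ℕ) where
  hr : 1 ≤ r
  center : Fin (2 * r) → ℝ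
  radius : Fin (2 * r) → ℝ
  radius_pos : ∀ a, 0 < radius a
  disj : Pairwise fun a b =>
    Disjoint (closedBall ((center a : ℝ) : ℂ) (radius a)) (closedBall ((center b : ℝ) : ℂ) (radius b))
  γ : Fin (2 * r) → SL2R
  γ_bar : ∀ a, γ (bar a) = (γ a)⁻¹
  γ_maps : ∀ a, moebius (γ a) ''
      (univ \ ((fun z : ℂ => (z : OnePoint ℂ)) '' interior (closedBall ((center (bar a) : ℝ) : ℂ) (radius (bar a)))))
    = (fun z : ℂ => (z : OnePoint ℂ)) '' closedBall ((center a : ℝ) : ℂ) (radius a)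

/-- Words: finite sequences of letters with `a_{j+1} ≠ ā_j`. -/
def IsWord {r : ℕ} (w : List (Fin (2 * r))) : Prop := w.Chain' fun x y => y ≠ bar x

/-- The word `ā := ā_n ⋯ ā_1`. -/
def barWord {r : ℕ} (w : List (Fin (2 * r))) : List (Fin (2 * r)) := (w.map bar).reverse

namespace Schottky

variable {r : ℕ} (S : Schottky r)

/-- The disk `D_a` for a letter `a`. -/
def disk (a : Fin (2 * r)) : Set ℂ := closedBall ((S.center a : ℝ) : ℂ) (S.radius a)

/-- `γ_w := γ_{a_1} ⋯ γ_{a_n}`. -/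
def g (w : List (Fin (2 * r))) : SL2R := (w.map S.γ).prod

/-- The disk `D_w := γ_{w'}(D_{a_n})` of a nonempty word, as a subset of the Riemann sphere. -/
def sdisk : List (Fin (2 * r)) → Set (OnePoint ℂ)
  | [] => ∅
  | a :: w => moebius (S.g ((a :: w).dropLast)) ''
      ((fun z : ℂ => (z : OnePoint ℂ)) '' S.disk ((a :: w).getLast (List.cons_ne_nil a w)))

/-- The disk `D_w` as a subset of `ℂ`. -/
def wdisk (w : List (Fin (2 * r))) : Set ℂ := {z : ℂ | (z : OnePoint ℂ) ∈ S.sdisk w}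

/-- The interval `I_w = D_w ∩ ℝ`, as a subset of `ℝ`. -/
def wint (w : List (Fin (2 * r))) : Set ℝ := {x : ℝ | ((x : ℝ) : ℂ) ∈ S.wdisk w}

/-- The length `|I_w|` of the interval `I_w`. -/
def wlen (w : List (Fin (2 * r))) : ℝ := Metric.diam (S.wint w)

/-- `D = ⋃_{a ∈ A} D_a`. -/
def D : Set ℂ := ⋃ a, S.disk a

/-- `I = D ∩ ℝ`, as a subset of `ℝ`. -/
def Ire : Set ℝ := {x : ℝ | ((x : ℝ) : ℂ) ∈ S.D}

/-- `D₂ = ⋃_{|w| = 2} D_w`. -/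
def D₂ : Set ℂ := ⋃ (a : Fin (2 * r)), ⋃ (b : Fin (2 * r)), ⋃ (_ : b ≠ bar a), S.wdisk [a, b]

/-- `I'_a` for a letter `a`: the convex hull of `⋃_{b ≠ ā} I_{ab}`. -/
def iprimeLetter (a : Fin (2 * r)) : Set ℝ :=
  convexHull ℝ (⋃ (b : Fin (2 * r)), ⋃ (_ : b ≠ bar a), S.wint [a, b])

/-- `I'_w := γ_{w'}(I'_{a_n})` for a nonempty word `w`. -/
def iprime : List (Fin (2 * r)) → Set ℝ
  | [] => ∅
  | a :: w => moebiusR (S.g ((a :: w).dropLast)) ''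
      S.iprimeLetter ((a :: w).getLast (List.cons_ne_nil a w))

/-- The partition `Z(τ)`. -/
def Ztau (τ : ℝ) : Set (List (Fin (2 * r))) :=
  {w | w ≠ [] ∧ IsWord w ∧ S.wlen w ≤ τ ∧ (w.dropLast = [] ∨ τ < S.wlen w.dropLast)}

/-- The limit set `Λ_Γ ⊂ ℝ`. -/
def limitSet : Set ℝ :=
  {x : ℝ | ∀ n : ℕ, 1 ≤ n → ∃ w : List (Fin (2 * r)), IsWord w ∧ w.length = n ∧ x ∈ S.wint w}

/-- The τ-neighbourhood `Λ_Γ(τ) ⊂ ℝ` of the limit set. -/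
def limitSetNbhd (τ : ℝ) : Set ℝ := {x : ℝ | ∃ y ∈ S.limitSet, |x - y| ≤ τ}

end Schottky

/-- `ℓ` is a holomorphic branch on `U` of the logarithm of the derivative of the Möbius
transformation of `g`, real on `U ∩ ℝ`. -/
structure IsLogBranch (g : SL2R) (U : Set ℂ) (ℓ : ℂ → ℂ) : Prop where
  holo : DifferentiableOn ℂ ℓ U
  exp_eq : ∀ z ∈ U, Complex.exp (ℓ z) = dMob g z
  real_on : ∀ x : ℝ, ((x : ℝ) : ℂ) ∈ U → (ℓ ((x : ℝ) : ℂ)).im = 0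

/-- A family of branches `ℓ a b` of `log γ_a'` on `D_b`, for all `a ≠ b̄`. -/
def IsBranchFamily {r : ℕ} (S : Schottky r) (ℓ : Fin (2 * r) → Fin (2 * r) → ℂ → ℂ) : Prop :=
  ∀ a b : Fin (2 * r), a ≠ bar b → IsLogBranch (S.γ a) (S.disk b) (ℓ a b)

/-- The fixed-point equation `L_s u = u` on the interior of `D`, written pointwise. -/
def TransferFixed {r : ℕ} (S : Schottky r) (s : ℂ)
    (ℓ : Fin (2 * r) → Fin (2 * r) → ℂ → ℂ) (u : ℂ → ℂ) : Prop :=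
  ∀ b : Fin (2 * r), ∀ z ∈ interior (S.disk b),
    u z = ∑ a : Fin (2 * r), if a ≠ bar b then
      Complex.exp (s * ℓ a b z) * u (moebiusC (S.γ a) z) else 0

/-- The transfer operator `L_s`, as an operator on functions. -/
def transferOp {r : ℕ} (S : Schottky r) (s : ℂ)
    (ℓ : Fin (2 * r) → Fin (2 * r) → ℂ → ℂ) (u : ℂ → ℂ) : ℂ → ℂ := fun z =>
  ∑ b : Fin (2 * r), (S.disk b).indicator
    (fun w => ∑ a : Fin (2 * r), if a ≠ bar b then
      Complex.exp (s * ℓ a b w) * u (moebiusC (S.γ a) w) else 0) z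

/-- A partition: a finite set of nonempty words such that every long enough word
has exactly one prefix in it. -/
def IsPartition {r : ℕ} (S : Schottky r) (Z : Finset (List (Fin (2 * r)))) : Prop :=
  (∀ w ∈ Z, w ≠ [] ∧ IsWord w) ∧
  ∃ N : ℕ, ∀ w : List (Fin (2 * r)), IsWord w → N ≤ w.length →
    ∃! p : List (Fin (2 * r)), p ∈ Z ∧ p <+: w


/-! ### Auxiliary lemmas -/

section Aux

lemma bar_val {r : ℕ} (a : Fin (2 * r)) :
    (bar a : ℕ) = if (a : ℕ) < r then (a : ℕ) + r else (a : ℕ) - r := by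
  unfold bar
  split_ifs <;> rfl

lemma bar_bar {r : ℕ} (a : Fin (2 * r)) : bar (bar a) = a := by
  have := a.isLt
  apply Fin.ext
  rw [bar_val, bar_val]
  split_ifs <;> omega

lemma bar_ne_self {r : ℕ} (a : Fin (2 * r)) : bar a ≠ a := by
  have := a.isLt
  rw [Ne, Fin.ext_iff, bar_val]
  split_ifs <;> omega

lemma ne_bar_symm {r : ℕ} {a b : Fin (2 * r)} (h : a ≠ bar b) : b ≠ bar a := by
  intro hb
  exact h (by rw [hb, bar_bar])

lemma barWord_barWord {r : ℕ} (w : List (Fin (2 * r))) : barWord (barWord w) = w := by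
  unfold barWord
  rw [List.map_reverse, List.reverse_reverse, List.map_map]
  conv_rhs => rw [← List.map_id w]
  exact List.map_congr_left fun a _ => bar_bar a

lemma barWord_length {r : ℕ} (w : List (Fin (2 * r))) : (barWord w).length = w.length := by
  simp [barWord]

lemma barWord_nil {r : ℕ} : (barWord ([] : List (Fin (2 * r)))) = [] := rfl

lemma barWord_ne_nil {r : ℕ} {w : List (Fin (2 * r))} (h : w ≠ []) : barWord w ≠ [] := by
  intro hc
  apply h
  rw [← barWord_barWord w, hc, barWord_nil]

lemma IsWord.barWord {r : ℕ} {w : List (Fin (2 * r))} (h : IsWord w) : IsWord (_root_.barWord w) := by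
  unfold _root_.barWord IsWord
  rw [List.Chain', List.isChain_reverse, List.isChain_map]
  unfold IsWord List.Chain' at h
  refine h.imp ?_
  intro a b hab
  simp only [flip, bar_bar]
  intro hc
  exact hab (by rw [hc])

lemma barWord_suffix {r : ℕ} {p w : List (Fin (2 * r))} (h : p <+: w) :
    barWord p <:+ barWord w := by
  unfold barWord
  rw [List.reverse_suffix]
  exact h.map bar

lemma suffix_eq_of_length {α : Type*} {p q l : List α} (hp : p <:+ l) (hq : q <:+ l)
    (hlen : p.length = q.length) : p = q := by
  obtain ⟨t₁, h₁⟩ := hp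
  obtain ⟨t₂, h₂⟩ := hq
  have h := h₁.trans h₂.symm
  exact List.append_inj_right h (by
    have := congrArg List.length h
    simp only [List.length_append] at this
    omega)

lemma isWord_of_append {r : ℕ} {v : List (Fin (2 * r))} {b : Fin (2 * r)}
    (h : IsWord (v ++ [b])) : IsWord v :=
  (List.isChain_append.mp h).1

lemma word_junction {r : ℕ} {v : List (Fin (2 * r))} {b : Fin (2 * r)}
    (h : IsWord (v ++ [b])) (hv : v ≠ []) : b ≠ bar (v.getLast hv) := by
  have h3 := (List.isChain_append.mp h).2.2
  exact h3 _ (by simp [List.getLast?_eq_getLast hv]) b (by simp)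

lemma headD_junction {r : ℕ} {v : List (Fin (2 * r))} {a b : Fin (2 * r)}
    (h : IsWord ((a :: v) ++ [b])) : v.headD b ≠ bar a := by
  have := (List.isChain_cons.mp h).1
  cases v with
  | nil => exact this b rfl
  | cons c t => exact this c rfl

lemma isWord_cons {r : ℕ} {v : List (Fin (2 * r))} {a b : Fin (2 * r)}
    (h : IsWord (v ++ [b])) (ha : v.headD b ≠ bar a) : IsWord ((a :: v) ++ [b]) := by
  refine List.isChain_cons.mpr ⟨?_, h⟩
  intro y hy
  cases v with
  | nil => simp at hy; subst hy; exact ha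
  | cons c t => simp at hy; subst hy; exact ha

/-! ### Matrix entry lemmas -/

lemma SL2_mul_entry (g₁ g₂ : SL2R) (i j : Fin 2) :
    (g₁ * g₂).1 i j = g₁.1 i 0 * g₂.1 0 j + g₁.1 i 1 * g₂.1 1 j := by
  have : ((g₁ * g₂ : SL2R) : Matrix (Fin 2) (Fin 2) ℝ) = (g₁ : Matrix (Fin 2) (Fin 2) ℝ) * g₂ :=
    Matrix.SpecialLinearGroup.coe_mul g₁ g₂
  rw [show (g₁ * g₂).1 = ((g₁ * g₂ : SL2R) : Matrix (Fin 2) (Fin 2) ℝ) from rfl, this,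
    Matrix.mul_apply, Fin.sum_univ_two]

lemma SL2_det (g : SL2R) : g.1 0 0 * g.1 1 1 - g.1 0 1 * g.1 1 0 = 1 := by
  have := g.2
  rwa [Matrix.det_fin_two] at this

/-- Real denominator of the Möbius transformation. -/
def denR (g : SL2R) (x : ℝ) : ℝ := g.1 1 0 * x + g.1 1 1

/-- Real derivative factor. -/
def rho (g : SL2R) (x : ℝ) : ℝ := ((denR g x)⁻¹) ^ 2

lemma denC_ofReal (g : SL2R) (x : ℝ) : mC g * (x : ℂ) + mD g = ((denR g x : ℝ) : ℂ) := by
  unfold mC mD denR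
  push_cast
  ring

lemma moebiusC_ofReal (g : SL2R) (x : ℝ) : moebiusC g (x : ℂ) = ((moebiusR g x : ℝ) : ℂ) := by
  unfold moebiusC moebiusR mA mB mC mD
  push_cast
  ring_nf

lemma dMob_ofReal (g : SL2R) (x : ℝ) : dMob g (x : ℂ) = ((rho g x : ℝ) : ℂ) := by
  unfold dMob rho
  rw [denC_ofReal]
  push_cast
  ring

@[simp] lemma denR_one (x : ℝ) : denR 1 x = 1 := by
  unfold denR
  rw [show ((1 : SL2R) : Matrix (Fin 2) (Fin 2) ℝ) = 1 from rfl]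
  simp [Matrix.one_apply]

@[simp] lemma rho_one (x : ℝ) : rho 1 x = 1 := by simp [rho]

@[simp] lemma moebiusR_one (x : ℝ) : moebiusR 1 x = x := by
  unfold moebiusR
  rw [show ((1 : SL2R) : Matrix (Fin 2) (Fin 2) ℝ) = 1 from rfl]
  simp [Matrix.one_apply]

lemma denR_mul (g₁ g₂ : SL2R) (x : ℝ) (h : denR g₂ x ≠ 0) :
    denR (g₁ * g₂) x = denR g₂ x * denR g₁ (moebiusR g₂ x) := by
  unfold denR moebiusR at *
  rw [SL2_mul_entry, SL2_mul_entry]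
  field_simp
  ring

lemma moebiusR_mul (g₁ g₂ : SL2R) (x : ℝ) (h : denR g₂ x ≠ 0) :
    moebiusR (g₁ * g₂) x = moebiusR g₁ (moebiusR g₂ x) := by
  have hden : (g₁ * g₂).1 1 0 * x + (g₁ * g₂).1 1 1
      = (g₂.1 1 0 * x + g₂.1 1 1) * (g₁.1 1 0 * moebiusR g₂ x + g₁.1 1 1) := by
    have := denR_mul g₁ g₂ x h
    unfold denR at this
    exact this
  have hnum : (g₁ * g₂).1 0 0 * x + (g₁ * g₂).1 0 1
      = (g₂.1 1 0 * x + g₂.1 1 1) * (g₁.1 0 0 * moebiusR g₂ x + g₁.1 0 1) := by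
    unfold moebiusR denR at *
    rw [SL2_mul_entry, SL2_mul_entry]
    field_simp
    ring
  unfold moebiusR
  rw [hnum, hden, mul_div_mul_left _ _ (by unfold denR at h; exact h)]
  rfl

lemma rho_mul (g₁ g₂ : SL2R) (x : ℝ) (h : denR g₂ x ≠ 0) :
    rho (g₁ * g₂) x = rho g₁ (moebiusR g₂ x) * rho g₂ x := by
  unfold rho
  rw [denR_mul g₁ g₂ x h, mul_inv, mul_pow]
  ring

lemma denC_mul (g₁ g₂ : SL2R) (z : ℂ) (h : mC g₂ * z + mD g₂ ≠ 0) :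
    mC (g₁ * g₂) * z + mD (g₁ * g₂)
      = (mC g₂ * z + mD g₂) * (mC g₁ * moebiusC g₂ z + mD g₁) := by
  unfold moebiusC mA mB mC mD at *
  rw [SL2_mul_entry, SL2_mul_entry]
  push_cast
  field_simp
  ring

lemma moebiusC_mul (g₁ g₂ : SL2R) (z : ℂ) (h : mC g₂ * z + mD g₂ ≠ 0) :
    moebiusC (g₁ * g₂) z = moebiusC g₁ (moebiusC g₂ z) := by
  have hden := denC_mul g₁ g₂ z h
  have hnum : mA (g₁ * g₂) * z + mB (g₁ * g₂)
      = (mC g₂ * z + mD g₂) * (mA g₁ * moebiusC g₂ z + mB g₁) := by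
    unfold moebiusC mA mB mC mD at *
    rw [SL2_mul_entry, SL2_mul_entry]
    push_cast
    field_simp
    ring
  show (mA (g₁ * g₂) * z + mB (g₁ * g₂)) / (mC (g₁ * g₂) * z + mD (g₁ * g₂)) = _
  rw [hnum, hden, mul_div_mul_left _ _ h]
  rfl

lemma hasDerivAt_moebiusC (g : SL2R) (z : ℂ) (h : mC g * z + mD g ≠ 0) :
    HasDerivAt (moebiusC g) (dMob g z) z := by
  have h1 : HasDerivAt (fun w : ℂ => mA g * w + mB g) (mA g) z := by
    simpa using ((hasDerivAt_id z).const_mul (mA g)).add_const (mB g)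
  have h2 : HasDerivAt (fun w : ℂ => mC g * w + mD g) (mC g) z := by
    simpa using ((hasDerivAt_id z).const_mul (mC g)).add_const (mD g)
  have := h1.div h2 h
  refine this.congr_deriv (Eq.symm ?_)
  have hdet : mA g * mD g - mB g * mC g = 1 := by
    unfold mA mB mC mD
    rw [show ((g.1 0 0 : ℝ) : ℂ) * (g.1 1 1 : ℝ) - (g.1 0 1 : ℝ) * (g.1 1 0 : ℝ)
        = (((g.1 0 0 * g.1 1 1 - g.1 0 1 * g.1 1 0 : ℝ)) : ℂ) by push_cast; ring, SL2_det]
    norm_num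
  have hnum : mA g * (mC g * z + mD g) - (mA g * z + mB g) * mC g = 1 := by
    linear_combination hdet
  unfold dMob
  rw [hnum, inv_pow]
  exact (one_div _).symm

end Aux

/-! ### Schottky geometry lemmas -/

section Geo

variable {r : ℕ} (S : Schottky r)

lemma g_nil : S.g [] = 1 := rfl

lemma g_cons (a : Fin (2 * r)) (v : List (Fin (2 * r))) : S.g (a :: v) = S.γ a * S.g v := by
  simp [Schottky.g]

lemma g_singleton (a : Fin (2 * r)) : S.g [a] = S.γ a := by
  simp [Schottky.g]

lemma g_append (v w : List (Fin (2 * r))) : S.g (v ++ w) = S.g v * S.g w := by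
  simp [Schottky.g]

lemma disk_disjoint {a b : Fin (2 * r)} (h : a ≠ b) {z : ℂ} (hz : z ∈ S.disk a) :
    z ∉ S.disk b := fun hz' => (Set.disjoint_left.mp (S.disj h) hz) hz'

lemma not_mem_interior_disk {a b : Fin (2 * r)} (h : a ≠ b) {z : ℂ} (hz : z ∈ S.disk a) :
    z ∉ interior (S.disk b) := fun hz' => disk_disjoint S h hz (interior_subset hz')

/-- Single-letter mapping property, extracted from `γ_maps`. -/
lemma letter_maps (a : Fin (2 * r)) (z : ℂ) (hz : z ∉ interior (S.disk (bar a))) :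
    mC (S.γ a) * z + mD (S.γ a) ≠ 0 ∧ moebiusC (S.γ a) z ∈ S.disk a := by
  have hmem : (z : OnePoint ℂ) ∈
      (univ \ ((fun z : ℂ => (z : OnePoint ℂ)) ''
        interior (closedBall ((S.center (bar a) : ℝ) : ℂ) (S.radius (bar a))))) := by
    refine ⟨trivial, ?_⟩
    rintro ⟨w, hw, hwz⟩
    have : w = z := by
      simpa using hwz
    rw [this] at hw
    exact hz hw
  have himg : moebius (S.γ a) (z : OnePoint ℂ) ∈
      (fun z : ℂ => (z : OnePoint ℂ)) '' closedBall ((S.center a : ℝ) : ℂ) (S.radius a) := by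
    rw [← S.γ_maps a]
    exact ⟨(z : OnePoint ℂ), hmem, rfl⟩
  obtain ⟨w, hw, hwz⟩ := himg
  have heval : moebius (S.γ a) (z : OnePoint ℂ)
      = if mC (S.γ a) * z + mD (S.γ a) = 0 then OnePoint.infty
        else ((moebiusC (S.γ a) z : ℂ) : OnePoint ℂ) := rfl
  by_cases hden : mC (S.γ a) * z + mD (S.γ a) = 0
  · rw [heval, if_pos hden] at hwz
    exact (OnePoint.coe_ne_infty w (by simpa using hwz)).elim
  · refine ⟨hden, ?_⟩
    rw [heval, if_neg hden] at hwz
    have : moebiusC (S.γ a) z = w := by simpa using hwz.symm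
    rw [this]
    exact hw

/-- Word mapping property. -/
lemma word_maps : ∀ (v : List (Fin (2 * r))) (hv : v ≠ []), IsWord v →
    ∀ z : ℂ, z ∉ interior (S.disk (bar (v.getLast hv))) →
    mC (S.g v) * z + mD (S.g v) ≠ 0 ∧ moebiusC (S.g v) z ∈ S.disk (v.head hv) := by
  intro v
  induction v with
  | nil => intro hv; exact absurd rfl hv
  | cons a v ih =>
    intro _ hw z hz
    cases v with
    | nil =>
      have := letter_maps S a z (by simpa using hz)
      rw [show S.g [a] = S.γ a from g_singleton S a]
      simpa using this
    | cons c t =>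
      have hvne : (c :: t) ≠ [] := by simp
      have hwtail : IsWord (c :: t) := (List.isChain_cons_cons.mp hw).2
      have hac : c ≠ bar a := (List.isChain_cons_cons.mp hw).1
      have hlast : (a :: c :: t).getLast (by simp) = (c :: t).getLast hvne := by
        rw [List.getLast_cons hvne]
      rw [hlast] at hz
      obtain ⟨hden, hmem⟩ := ih hvne hwtail z hz
      have hnot : moebiusC (S.g (c :: t)) z ∉ interior (S.disk (bar a)) := by
        have hhead : (c :: t).head hvne = c := rfl
        rw [hhead] at hmem
        exact not_mem_interior_disk S hac hmem
      obtain ⟨hden2, hmem2⟩ := letter_maps S a _ hnot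
      constructor
      · rw [g_cons, denC_mul _ _ _ hden]
        exact mul_ne_zero hden hden2
      · rw [g_cons, moebiusC_mul _ _ _ hden]
        exact hmem2

lemma moebius_coe (g : SL2R) (z : ℂ) (h : mC g * z + mD g ≠ 0) :
    moebius g (z : OnePoint ℂ) = ((moebiusC g z : ℂ) : OnePoint ℂ) := by
  show (if mC g * z + mD g = 0 then OnePoint.infty
      else (((mA g * z + mB g) / (mC g * z + mD g) : ℂ) : OnePoint ℂ)) = _
  rw [if_neg h]
  rfl

section Geo2

variable {r : ℕ} (S : Schottky r)

lemma sdisk_pair (a c : Fin (2 * r)) :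
    S.sdisk [a, c] = moebius (S.γ a) '' ((fun z : ℂ => (z : OnePoint ℂ)) '' S.disk c) := by
  show moebius (S.g [a]) '' _ = _
  rw [g_singleton]
  rfl

lemma mem_wint_pair {a c : Fin (2 * r)} (z : ℝ) (hz : ((z : ℝ) : ℂ) ∈ S.disk c)
    (hne : ((z : ℝ) : ℂ) ∉ interior (S.disk (bar a))) :
    moebiusR (S.γ a) z ∈ S.wint [a, c] := by
  obtain ⟨hden, hmem⟩ := letter_maps S a z hne
  show (((moebiusR (S.γ a) z : ℝ) : ℂ) : OnePoint ℂ) ∈ S.sdisk [a, c]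
  rw [sdisk_pair]
  refine ⟨((z : ℝ) : ℂ), ⟨(z : ℂ), hz, rfl⟩, ?_⟩
  rw [moebius_coe _ _ hden, moebiusC_ofReal]

lemma wint_pair_subset {a c : Fin (2 * r)} (hca : c ≠ bar a) :
    S.wint [a, c] ⊆ {t : ℝ | ((t : ℝ) : ℂ) ∈ S.disk a} := by
  intro t ht
  have hmem : (((t : ℝ) : ℂ) : OnePoint ℂ) ∈ S.sdisk [a, c] := ht
  rw [sdisk_pair] at hmem
  obtain ⟨ζ, hζ, hmo⟩ := hmem
  obtain ⟨w, hw, rfl⟩ := hζ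
  have hnotin : w ∉ interior (S.disk (bar a)) := not_mem_interior_disk S hca hw
  obtain ⟨hden, hmemw⟩ := letter_maps S a w hnotin
  rw [moebius_coe _ _ hden] at hmo
  have : moebiusC (S.γ a) w = ((t : ℝ) : ℂ) := by simpa using hmo
  rw [this] at hmemw
  exact hmemw

lemma Ia_eq (a : Fin (2 * r)) :
    {t : ℝ | ((t : ℝ) : ℂ) ∈ S.disk a} = Metric.closedBall (S.center a) (S.radius a) := by
  ext t
  simp only [Schottky.disk, Set.mem_setOf_eq, Metric.mem_closedBall, Complex.dist_eq,
    ← Complex.ofReal_sub, Complex.norm_real, Real.norm_eq_abs, Real.dist_eq]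

lemma iprimeLetter_subset (a : Fin (2 * r)) :
    S.iprimeLetter a ⊆ {t : ℝ | ((t : ℝ) : ℂ) ∈ S.disk a} := by
  unfold Schottky.iprimeLetter
  refine convexHull_min (Set.iUnion₂_subset fun c hc => wint_pair_subset S hc) ?_
  rw [Ia_eq]
  exact convex_closedBall _ _

lemma iprimeLetter_nonempty (a : Fin (2 * r)) : (S.iprimeLetter a).Nonempty := by
  refine ⟨moebiusR (S.γ a) (S.center a), subset_convexHull _ _ ?_⟩
  refine Set.mem_iUnion.mpr ⟨a, Set.mem_iUnion.mpr ⟨(bar_ne_self a).symm, ?_⟩⟩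
  exact mem_wint_pair S _ (Metric.mem_closedBall_self (S.radius_pos a).le)
    (not_mem_interior_disk S (Ne.symm (bar_ne_self a))
      (Metric.mem_closedBall_self (S.radius_pos a).le))

lemma iprime_eq (v : List (Fin (2 * r))) (hv : v ≠ []) :
    S.iprime v = moebiusR (S.g v.dropLast) '' S.iprimeLetter (v.getLast hv) := by
  cases v with
  | nil => exact absurd rfl hv
  | cons a w => rfl

lemma iprime_nonempty (v : List (Fin (2 * r))) (hv : v ≠ []) : (S.iprime v).Nonempty := by
  rw [iprime_eq S v hv]
  exact (iprimeLetter_nonempty S _).image _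

lemma iprime_subset_D (v : List (Fin (2 * r))) (hv : v ≠ []) (hw : IsWord v) :
    ∀ t ∈ S.iprime v, ((t : ℝ) : ℂ) ∈ S.D := by
  intro t ht
  rw [iprime_eq S v hv] at ht
  obtain ⟨t', ht', rfl⟩ := ht
  have ht'd : ((t' : ℝ) : ℂ) ∈ S.disk (v.getLast hv) := iprimeLetter_subset S _ ht'
  rcases eq_or_ne v.dropLast [] with hd | hd
  · rw [hd, g_nil, moebiusR_one]
    exact Set.mem_iUnion.mpr ⟨_, ht'd⟩
  · have hsplit : v.dropLast ++ [v.getLast hv] = v := List.dropLast_append_getLast hv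
    have hw' : IsWord (v.dropLast ++ [v.getLast hv]) := by rw [hsplit]; exact hw
    have hwd : IsWord v.dropLast := isWord_of_append hw'
    have hjunc : v.getLast hv ≠ bar (v.dropLast.getLast hd) := word_junction hw' hd
    have hnotin : ((t' : ℝ) : ℂ) ∉ interior (S.disk (bar (v.dropLast.getLast hd))) :=
      not_mem_interior_disk S hjunc ht'd
    obtain ⟨hden, hmem⟩ := word_maps S v.dropLast hd hwd _ hnotin
    rw [moebiusC_ofReal] at hmem
    exact Set.mem_iUnion.mpr ⟨_, hmem⟩

lemma t_mem_iprime {v : List (Fin (2 * r))} {b : Fin (2 * r)} {x : ℝ}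
    (hv : v ≠ []) (hw : IsWord (v ++ [b])) (hx : ((x : ℝ) : ℂ) ∈ S.disk b) :
    moebiusR (S.g v) x ∈ S.iprime v := by
  set lst := v.getLast hv with hlst
  have hjb : b ≠ bar lst := word_junction hw hv
  have hne : ((x : ℝ) : ℂ) ∉ interior (S.disk (bar lst)) := not_mem_interior_disk S hjb hx
  obtain ⟨hden, hmem⟩ := letter_maps S lst ((x : ℝ) : ℂ) hne
  have hdenR : denR (S.γ lst) x ≠ 0 := by
    intro h0
    apply hden
    rw [denC_ofReal, h0, Complex.ofReal_zero]
  have hs₀ : moebiusR (S.γ lst) x ∈ S.iprimeLetter lst := by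
    refine subset_convexHull _ _ ?_
    exact Set.mem_iUnion.mpr ⟨b, Set.mem_iUnion.mpr ⟨hjb, mem_wint_pair S x hx hne⟩⟩
  have heq : moebiusR (S.g v) x = moebiusR (S.g v.dropLast) (moebiusR (S.γ lst) x) := by
    conv_lhs => rw [← List.dropLast_append_getLast hv]
    rw [g_append, g_singleton, ← hlst, moebiusR_mul _ _ _ hdenR]
  rw [iprime_eq S v hv, heq]
  exact ⟨_, hs₀, rfl⟩

end Geo2

set_option maxHeartbeats 1000000 in
/-- There is `C > 0` depending only on the Schottky data such that for
`s = 1/2 − ν + i/h`, any partition `Z` and any `u` continuous on `D`, holomorphic on its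
interior with `L_s u = u`: `sup_I |u| ≤ C Σ_{a ∈ Z} sup_{I'_{ā}} |u|`. -/
theorem stmt16 {r : ℕ} (S : Schottky r) :
    ∃ C : ℝ, 0 < C ∧
      ∀ h ∈ Set.Ioc (0 : ℝ) 1, ∀ ν ∈ Set.Icc (0 : ℝ) (1 / 2),
      ∀ Z : Finset (List (Fin (2 * r))), IsPartition S Z →
      ∀ ℓ : Fin (2 * r) → Fin (2 * r) → ℂ → ℂ, IsBranchFamily S ℓ →
      ∀ u : ℂ → ℂ, ContinuousOn u S.D → DifferentiableOn ℂ u (interior S.D) →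
        TransferFixed S (1 / 2 - ν + I / h) ℓ u →
      ∀ x ∈ S.Ire, ‖u ((x : ℝ) : ℂ)‖
        ≤ C * ∑ w ∈ Z, sSup ((fun t : ℝ => ‖u ((t : ℝ) : ℂ)‖) '' S.iprime (barWord w)) := by
  classical
  have hr1 := S.hr
  -- strict gap between disjoint disks
  have hgap : ∀ a c : Fin (2 * r), a ≠ c →
      0 < dist ((S.center a : ℝ) : ℂ) ((S.center c : ℝ) : ℂ) - S.radius a - S.radius c := by
    intro a c hac
    by_contra hcon
    push_neg at hcon
    have hdisj := S.disj hac
    set A := ((S.center a : ℝ) : ℂ) with hA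
    set Bc := ((S.center c : ℝ) : ℂ) with hBc
    have hra := S.radius_pos a
    have hrc := S.radius_pos c
    rcases le_or_gt (dist A Bc) (S.radius a) with hle | hlt
    · exact Set.disjoint_left.mp hdisj
        (Metric.mem_closedBall.mpr (by rw [dist_comm]; exact hle))
        (Metric.mem_closedBall_self hrc.le)
    · set d := dist A Bc with hd
      have hd0 : 0 < d := hra.trans hlt
      set p := A + (S.radius a / d) • (Bc - A) with hp
      have hAB : ‖A - Bc‖ = d := by rw [hd, dist_eq_norm]
      have h1 : p ∈ Metric.closedBall A (S.radius a) := by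
        rw [Metric.mem_closedBall, dist_eq_norm]
        have hpA : p - A = (S.radius a / d) • (Bc - A) := by rw [hp]; module
        rw [hpA, norm_smul, show ‖Bc - A‖ = d by rw [← hAB, norm_sub_rev]]
        rw [Real.norm_eq_abs, _root_.abs_of_nonneg (by positivity), div_mul_cancel₀ _ hd0.ne']
      have h2 : p ∈ Metric.closedBall Bc (S.radius c) := by
        rw [Metric.mem_closedBall, dist_eq_norm]
        have hpB : p - Bc = (1 - S.radius a / d) • (A - Bc) := by rw [hp]; module
        have hfrac : S.radius a / d ≤ 1 := (div_le_one hd0).mpr hlt.le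
        rw [hpB, norm_smul, hAB, Real.norm_eq_abs, _root_.abs_of_nonneg (by linarith)]
        have hmul : (1 - S.radius a / d) * d = d - S.radius a := by field_simp
        rw [hmul]
        linarith
      exact Set.disjoint_left.mp hdisj h1 h2
  -- the minimal gap δ
  have hne2 : (Finset.univ.offDiag : Finset (Fin (2 * r) × Fin (2 * r))).Nonempty := by
    refine ⟨(⟨0, by omega⟩, ⟨1, by omega⟩),
      Finset.mem_offDiag.mpr ⟨Finset.mem_univ _, Finset.mem_univ _, ?_⟩⟩
    intro hcon
    have h1 := congrArg Fin.val hcon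
    simp at h1
  obtain ⟨δ, hδpos, hδle⟩ : ∃ δ : ℝ, 0 < δ ∧ ∀ a c : Fin (2 * r), a ≠ c →
      δ ≤ dist ((S.center a : ℝ) : ℂ) ((S.center c : ℝ) : ℂ) - S.radius a - S.radius c := by
    refine ⟨Finset.univ.offDiag.inf' hne2
      (fun p : Fin (2 * r) × Fin (2 * r) =>
        dist ((S.center p.1 : ℝ) : ℂ) ((S.center p.2 : ℝ) : ℂ) - S.radius p.1 - S.radius p.2),
      ?_, ?_⟩
    · rw [Finset.lt_inf'_iff]
      intro p hp
      exact hgap p.1 p.2 (Finset.mem_offDiag.mp hp).2.2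
    · intro a c hac
      exact Finset.inf'_le (b := (a, c)) _
        (Finset.mem_offDiag.mpr ⟨Finset.mem_univ _, Finset.mem_univ _, hac⟩)
  have hδ : ∀ a c : Fin (2 * r), a ≠ c → ∀ p ∈ S.disk a, ∀ q ∈ S.disk c, δ ≤ dist p q := by
    intro a c hac p hp q hq
    have h1 := hδle a c hac
    simp only [Schottky.disk, Metric.mem_closedBall] at hp hq
    have t1 := dist_triangle ((S.center a : ℝ) : ℂ) p ((S.center c : ℝ) : ℂ)
    have t2 := dist_triangle p q ((S.center c : ℝ) : ℂ)
    have e1 : dist ((S.center a : ℝ) : ℂ) p = dist p ((S.center a : ℝ) : ℂ) := dist_comm _ _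
    have e2 : dist q ((S.center c : ℝ) : ℂ) ≤ S.radius c := hq
    linarith
  -- uniform size bound
  obtain ⟨M, hM⟩ : ∃ M : ℝ, ∀ a : Fin (2 * r), 2 * S.radius a + 1 ≤ M := by
    have hmemuniv : (Finset.univ : Finset (Fin (2 * r))).Nonempty :=
      ⟨⟨0, by omega⟩, Finset.mem_univ _⟩
    exact ⟨Finset.univ.sup' hmemuniv (fun a => 2 * S.radius a + 1),
      fun a => Finset.le_sup' (f := fun a => 2 * S.radius a + 1) (Finset.mem_univ a)⟩
  set C := max 1 (M / δ) with hCdef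
  have hC1 : (1 : ℝ) ≤ C := le_max_left _ _
  have hC0 : (0 : ℝ) ≤ C := zero_le_one.trans hC1
  refine ⟨C, lt_of_lt_of_le one_pos hC1, ?_⟩
  intro h hh ν hν Z hZ ℓ hbf u hu hud htf x hx
  obtain ⟨N, hN⟩ := hZ.2
  set e : ℝ := 1 / 2 - ν with hedef
  have he0 : 0 ≤ e := by have := hν.2; rw [hedef]; linarith
  have he1 : e ≤ 1 := by have := hν.1; rw [hedef]; linarith
  have hsre : ((1 : ℂ) / 2 - (ν : ℂ) + I / (h : ℂ)).re = e := by
    have h1 : (Complex.I / (h : ℂ)).re = 0 := by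
      rw [div_eq_mul_inv, ← Complex.ofReal_inv]
      simp [Complex.mul_re]
    rw [Complex.add_re, Complex.sub_re, h1, hedef]
    norm_num
  -- bound for u on D
  have hDsub : ∀ a : Fin (2 * r), S.disk a ⊆ S.D := fun a => Set.subset_iUnion _ a
  have hDcomp : IsCompact S.D := isCompact_iUnion fun a => isCompact_closedBall _ _
  obtain ⟨B, hB⟩ := hDcomp.exists_bound_of_continuousOn hu
  -- fixed point equation on the closed disks
  have hfix : ∀ c : Fin (2 * r), ∀ z ∈ S.disk c,
      u z = ∑ a : Fin (2 * r), if a ≠ bar c then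
        Complex.exp ((1 / 2 - ν + I / h) * ℓ a c z) * u (moebiusC (S.γ a) z) else 0 := by
    intro c
    have hrad : S.radius c ≠ 0 := (S.radius_pos c).ne'
    have hint : interior (S.disk c) = ball ((S.center c : ℝ) : ℂ) (S.radius c) :=
      interior_closedBall _ hrad
    have hEq : Set.EqOn u (fun z => ∑ a : Fin (2 * r), if a ≠ bar c then
        Complex.exp ((1 / 2 - ν + I / h) * ℓ a c z) * u (moebiusC (S.γ a) z) else 0)
        (ball ((S.center c : ℝ) : ℂ) (S.radius c)) := by
      intro z hz
      exact htf c z (by rw [hint]; exact hz)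
    have hcontR : ContinuousOn (fun z => ∑ a : Fin (2 * r), if a ≠ bar c then
        Complex.exp ((1 / 2 - ν + I / h) * ℓ a c z) * u (moebiusC (S.γ a) z) else 0)
        (S.disk c) := by
      refine continuousOn_finset_sum _ ?_
      intro a _
      by_cases hac : a ≠ bar c
      · simp only [if_pos hac]
        have hmoeb : ContinuousOn (fun z => moebiusC (S.γ a) z) (S.disk c) := by
          apply ContinuousOn.div
          · exact (Continuous.continuousOn (by continuity))
          · exact (Continuous.continuousOn (by continuity))
          · intro z hz
            exact (letter_maps S a z (not_mem_interior_disk S (ne_bar_symm hac) hz)).1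
        have hmaps : Set.MapsTo (fun z => moebiusC (S.γ a) z) (S.disk c) S.D := by
          intro z hz
          exact hDsub a (letter_maps S a z (not_mem_interior_disk S (ne_bar_symm hac) hz)).2
        refine ContinuousOn.mul ?_ (hu.comp hmoeb hmaps)
        exact Complex.continuous_exp.comp_continuousOn
          (continuousOn_const.mul (hbf a c hac).holo.continuousOn)
      · simp only [if_neg hac]
        exact continuousOn_const
    refine Set.EqOn.of_subset_closure hEq (hu.mono (hDsub c)) hcontR
      Metric.ball_subset_closedBall ?_
    rw [closure_ball _ hrad]
    exact fun z hz => hz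
  -- sSup facts
  have hsupfacts : ∀ v : List (Fin (2 * r)), v ≠ [] → IsWord v →
      (∀ t ∈ S.iprime v,
        ‖u ((t : ℝ) : ℂ)‖ ≤ sSup ((fun t : ℝ => ‖u ((t : ℝ) : ℂ)‖) '' S.iprime v)) ∧
      0 ≤ sSup ((fun t : ℝ => ‖u ((t : ℝ) : ℂ)‖) '' S.iprime v) := by
    intro v hv hwv
    have hsub := iprime_subset_D S v hv hwv
    have hbdd : BddAbove ((fun t : ℝ => ‖u ((t : ℝ) : ℂ)‖) '' S.iprime v) := by
      refine ⟨B, ?_⟩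
      rintro y ⟨t, ht, rfl⟩
      exact hB _ (hsub t ht)
    have hmem : ∀ t ∈ S.iprime v,
        ‖u ((t : ℝ) : ℂ)‖ ≤ sSup ((fun t : ℝ => ‖u ((t : ℝ) : ℂ)‖) '' S.iprime v) :=
      fun t ht => le_csSup hbdd (Set.mem_image_of_mem _ ht)
    obtain ⟨t₀, ht₀⟩ := iprime_nonempty S v hv
    exact ⟨hmem, (norm_nonneg _).trans (hmem t₀ ht₀)⟩
  have hsup0 : ∀ w ∈ Z, 0 ≤ sSup ((fun t : ℝ => ‖u ((t : ℝ) : ℂ)‖) '' S.iprime (barWord w)) :=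
    fun w hw => (hsupfacts (barWord w) (barWord_ne_nil (hZ.1 w hw).1) (hZ.1 w hw).2.barWord).2
  -- the base point
  have hx' : ((x : ℝ) : ℂ) ∈ S.D := hx
  obtain ⟨b, hxb⟩ := Set.mem_iUnion.mp hx'
  -- invariants along words
  have hinv : ∀ (v : List (Fin (2 * r))), IsWord (v ++ [b]) →
      denR (S.g v) x ≠ 0 ∧ ((moebiusR (S.g v) x : ℝ) : ℂ) ∈ S.disk (v.headD b) ∧
      0 < rho (S.g v) x ∧ rho (S.g v) x ≤ C := by
    intro v hw
    cases v with
    | nil =>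
      refine ⟨by simp [g_nil], ?_, by simp [g_nil, rho_one], ?_⟩
      · simp only [g_nil, moebiusR_one, List.headD_nil]
        exact hxb
      · simp only [g_nil, rho_one]
        exact hC1
    | cons a w =>
      set v := a :: w with hvdef
      have hv : v ≠ [] := by simp [hvdef]
      set lst := v.getLast hv with hlst
      have hjb : b ≠ bar lst := word_junction hw hv
      have hzx : ((x : ℝ) : ℂ) ∉ interior (S.disk (bar lst)) := not_mem_interior_disk S hjb hxb
      obtain ⟨hdenC, hmemC⟩ := word_maps S v hv (isWord_of_append hw) _ hzx
      have hdenR : denR (S.g v) x ≠ 0 := by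
        intro h0
        apply hdenC
        rw [denC_ofReal, h0, Complex.ofReal_zero]
      have hmemD : ((moebiusR (S.g v) x : ℝ) : ℂ) ∈ S.disk (v.headD b) := by
        rw [← moebiusC_ofReal]
        exact hmemC
      have hrpos : 0 < rho (S.g v) x := by
        rw [rho]
        exact pow_two_pos_of_ne_zero (inv_ne_zero hdenR)
      refine ⟨hdenR, hmemD, hrpos, ?_⟩
      -- Cauchy/Schwarz estimate
      have hball : ∀ z ∈ ball ((x : ℝ) : ℂ) δ, z ∉ interior (S.disk (bar lst)) := by
        intro z hz hzint
        have h1 : z ∈ S.disk (bar lst) := interior_subset hzint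
        have h2 := hδ b (bar lst) hjb _ hxb z h1
        rw [Metric.mem_ball] at hz
        rw [dist_comm] at hz
        exact absurd hz (not_lt.mpr h2)
      have hdiff : DifferentiableOn ℂ (fun z => moebiusC (S.g v) z) (ball ((x : ℝ) : ℂ) δ) := by
        intro z hz
        exact (hasDerivAt_moebiusC (S.g v) z
          (word_maps S v hv (isWord_of_append hw) z (hball z hz)).1).differentiableAt.differentiableWithinAt
      have hmapsTo : Set.MapsTo (fun z => moebiusC (S.g v) z) (ball ((x : ℝ) : ℂ) δ)
          (ball (moebiusC (S.g v) ((x : ℝ) : ℂ)) M) := by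
        intro z hz
        have h1 : moebiusC (S.g v) z ∈ S.disk (v.head hv) :=
          (word_maps S v hv (isWord_of_append hw) z (hball z hz)).2
        have h2 : moebiusC (S.g v) ((x : ℝ) : ℂ) ∈ S.disk (v.head hv) := hmemC
        simp only [Schottky.disk, Metric.mem_closedBall] at h1 h2
        rw [Metric.mem_ball]
        have t1 := dist_triangle_right (moebiusC (S.g v) z)
          (moebiusC (S.g v) ((x : ℝ) : ℂ)) ((S.center (v.head hv) : ℝ) : ℂ)
        have hMa := hM (v.head hv)
        linarith
      have hder := Complex.norm_deriv_le_div_of_mapsTo_ball hdiff (hmapsTo.mono_right Metric.ball_subset_closedBall) hδpos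
      have hderiv : deriv (fun z => moebiusC (S.g v) z) ((x : ℝ) : ℂ) = dMob (S.g v) ((x : ℝ) : ℂ) :=
        (hasDerivAt_moebiusC (S.g v) _ hdenC).deriv
      have hrnonneg : 0 ≤ rho (S.g v) x := by unfold rho; positivity
      have h2 : ‖dMob (S.g v) ((x : ℝ) : ℂ)‖ ≤ M / δ := by rw [← hderiv]; exact hder
      rw [dMob_ofReal, Complex.norm_real, Real.norm_eq_abs,
        _root_.abs_of_nonneg hrnonneg] at h2
      exact h2.trans (le_max_right _ _)
  -- ρ^e ≤ C
  have hrhoe : ∀ v : List (Fin (2 * r)), IsWord (v ++ [b]) → rho (S.g v) x ^ e ≤ C := by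
    intro v hw
    obtain ⟨-, -, hpos, hle⟩ := hinv v hw
    rcases le_total (rho (S.g v) x) 1 with h1 | h1
    · exact (Real.rpow_le_one hpos.le h1 he0).trans hC1
    · calc rho (S.g v) x ^ e ≤ rho (S.g v) x ^ (1 : ℝ) :=
            Real.rpow_le_rpow_of_exponent_le h1 he1
        _ = rho (S.g v) x := Real.rpow_one _
        _ ≤ C := hle
  -- the norm of a single weight
  have hweight : ∀ (a c : Fin (2 * r)), a ≠ bar c → ∀ t : ℝ, ((t : ℝ) : ℂ) ∈ S.disk c →
      ‖Complex.exp ((1 / 2 - ν + I / h) * ℓ a c ((t : ℝ) : ℂ))‖ = rho (S.γ a) t ^ e ∧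
      0 < rho (S.γ a) t := by
    intro a c hac t htc
    have hbr := hbf a c hac
    have hint : ((t : ℝ) : ℂ) ∉ interior (S.disk (bar a)) :=
      not_mem_interior_disk S (ne_bar_symm hac) htc
    have him : (ℓ a c ((t : ℝ) : ℂ)).im = 0 := hbr.real_on t htc
    have hexp : Complex.exp (ℓ a c ((t : ℝ) : ℂ)) = dMob (S.γ a) ((t : ℝ) : ℂ) :=
      hbr.exp_eq _ htc
    set L := (ℓ a c ((t : ℝ) : ℂ)).re with hLdef
    have hL : ℓ a c ((t : ℝ) : ℂ) = (L : ℂ) := by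
      apply Complex.ext
      · simp [hLdef]
      · simp [him]
    have hEL : Real.exp L = rho (S.γ a) t := by
      rw [hL, dMob_ofReal, ← Complex.ofReal_exp] at hexp
      exact_mod_cast hexp
    have hρpos : 0 < rho (S.γ a) t := hEL ▸ Real.exp_pos L
    constructor
    · rw [hL, Complex.norm_exp]
      have hre : (((1 : ℂ) / 2 - (ν : ℂ) + I / (h : ℂ)) * (L : ℂ)).re = e * L := by
        rw [Complex.mul_re, Complex.ofReal_re, Complex.ofReal_im, hsre]
        ring
      rw [hre, mul_comm, Real.exp_mul, hEL]
    · exact hρpos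
  -- base case: stopped word
  have hbase : ∀ (v : List (Fin (2 * r))) (hv : v ≠ []), IsWord (v ++ [b]) → barWord v ∈ Z →
      rho (S.g v) x ^ e * ‖u ((moebiusR (S.g v) x : ℝ) : ℂ)‖ ≤
        C * ∑ w ∈ Z.filter (fun w => v <:+ barWord w),
          sSup ((fun t : ℝ => ‖u ((t : ℝ) : ℂ)‖) '' S.iprime (barWord w)) := by
    intro v hv hw hvZ
    have hmemI : moebiusR (S.g v) x ∈ S.iprime v := t_mem_iprime S hv hw hxb
    have hfacts := hsupfacts v hv (isWord_of_append hw)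
    have h1 : rho (S.g v) x ^ e * ‖u ((moebiusR (S.g v) x : ℝ) : ℂ)‖ ≤
        C * sSup ((fun t : ℝ => ‖u ((t : ℝ) : ℂ)‖) '' S.iprime v) :=
      mul_le_mul (hrhoe v hw) (hfacts.1 _ hmemI) (norm_nonneg _) hC0
    refine h1.trans (mul_le_mul_of_nonneg_left ?_ hC0)
    have hmemF : barWord v ∈ Z.filter (fun w => v <:+ barWord w) :=
      Finset.mem_filter.mpr ⟨hvZ, by rw [barWord_barWord]⟩
    have hstep := Finset.single_le_sum
      (f := fun w => sSup ((fun t : ℝ => ‖u ((t : ℝ) : ℂ)‖) '' S.iprime (barWord w)))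
      (fun w hwZ => hsup0 w (Finset.mem_filter.mp hwZ).1) hmemF
    simp only [barWord_barWord] at hstep
    exact hstep
  -- main induction
  have claim : ∀ n : ℕ, ∀ v : List (Fin (2 * r)), IsWord (v ++ [b]) →
      (∀ q, q <:+ v → q ≠ v → barWord q ∉ Z) → N ≤ v.length + n →
      rho (S.g v) x ^ e * ‖u ((moebiusR (S.g v) x : ℝ) : ℂ)‖ ≤
        C * ∑ w ∈ Z.filter (fun w => v <:+ barWord w),
          sSup ((fun t : ℝ => ‖u ((t : ℝ) : ℂ)‖) '' S.iprime (barWord w)) := by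
    intro n
    induction n with
    | zero =>
      intro v hw hsuf hlen
      by_cases hvZ : barWord v ∈ Z
      · have hv : v ≠ [] := by
          intro h0
          exact (hZ.1 _ hvZ).1 (by rw [h0, barWord_nil])
        exact hbase v hv hw hvZ
      · exfalso
        have hwv : IsWord (barWord v) := (isWord_of_append hw).barWord
        have hlenv : N ≤ (barWord v).length := by rw [barWord_length]; omega
        obtain ⟨p, ⟨hpZ, hppre⟩, -⟩ := hN (barWord v) hwv hlenv
        have hq : barWord p <:+ v := by
          have := barWord_suffix hppre
          rwa [barWord_barWord] at this
        by_cases hqv : barWord p = v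
        · exact hvZ (by rw [← hqv, barWord_barWord]; exact hpZ)
        · exact hsuf _ hq hqv (by rw [barWord_barWord]; exact hpZ)
    | succ n IH =>
      intro v hw hsuf hlen
      by_cases hvZ : barWord v ∈ Z
      · have hv : v ≠ [] := by
          intro h0
          exact (hZ.1 _ hvZ).1 (by rw [h0, barWord_nil])
        exact hbase v hv hw hvZ
      · -- expansion step
        obtain ⟨hden, hmemD, hrpos, -⟩ := hinv v hw
        set c := v.headD b with hcdef
        set t0 := moebiusR (S.g v) x with ht0def
        have hfeq := hfix c ((t0 : ℝ) : ℂ) hmemD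
        have hterm : ∀ a : Fin (2 * r),
            rho (S.g v) x ^ e * ‖(if a ≠ bar c then
              Complex.exp ((1 / 2 - ν + I / h) * ℓ a c ((t0 : ℝ) : ℂ)) *
                u (moebiusC (S.γ a) ((t0 : ℝ) : ℂ)) else 0)‖ ≤
            (if a ≠ bar c then
              C * ∑ w ∈ Z.filter (fun w => (a :: v) <:+ barWord w),
                sSup ((fun t : ℝ => ‖u ((t : ℝ) : ℂ)‖) '' S.iprime (barWord w)) else 0) := by
          intro a
          by_cases hac : a ≠ bar c
          · simp only [if_pos hac]
            have hcne : c ≠ bar a := fun hcon => hac (by rw [hcon, bar_bar])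
            have hconsw : IsWord ((a :: v) ++ [b]) := isWord_cons hw hcne
            obtain ⟨hwnorm, hρa⟩ := hweight a c hac t0 hmemD
            have ht1 : moebiusC (S.γ a) ((t0 : ℝ) : ℂ) = ((moebiusR (S.g (a :: v)) x : ℝ) : ℂ) := by
              rw [moebiusC_ofReal]
              norm_cast
              rw [g_cons, moebiusR_mul _ _ _ hden]
            have hrhocons : rho (S.g (a :: v)) x = rho (S.γ a) t0 * rho (S.g v) x := by
              rw [g_cons, rho_mul _ _ _ hden]
            have hrecbound : rho (S.g (a :: v)) x ^ e *
                ‖u ((moebiusR (S.g (a :: v)) x : ℝ) : ℂ)‖ ≤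
                C * ∑ w ∈ Z.filter (fun w => (a :: v) <:+ barWord w),
                  sSup ((fun t : ℝ => ‖u ((t : ℝ) : ℂ)‖) '' S.iprime (barWord w)) := by
              by_cases hconsZ : barWord (a :: v) ∈ Z
              · exact hbase (a :: v) (by simp) hconsw hconsZ
              · refine IH (a :: v) hconsw ?_ (by simp; omega)
                intro q hq hqne
                rcases List.suffix_cons_iff.mp hq with hq1 | hq2
                · exact absurd hq1 hqne
                · rcases eq_or_ne q v with rfl | hqv
                  · exact hvZ
                  · exact hsuf q hq2 hqv
            calc rho (S.g v) x ^ e *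
                ‖Complex.exp ((1 / 2 - ν + I / h) * ℓ a c ((t0 : ℝ) : ℂ)) *
                  u (moebiusC (S.γ a) ((t0 : ℝ) : ℂ))‖
                = rho (S.g v) x ^ e * (rho (S.γ a) t0 ^ e *
                  ‖u ((moebiusR (S.g (a :: v)) x : ℝ) : ℂ)‖) := by
                  rw [norm_mul, hwnorm, ht1]
              _ = rho (S.g (a :: v)) x ^ e * ‖u ((moebiusR (S.g (a :: v)) x : ℝ) : ℂ)‖ := by
                  rw [hrhocons, Real.mul_rpow hρa.le hrpos.le]
                  ring
              _ ≤ _ := hrecbound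
          · simp only [if_neg hac, norm_zero, mul_zero, le_refl]
        calc rho (S.g v) x ^ e * ‖u ((t0 : ℝ) : ℂ)‖
            = rho (S.g v) x ^ e * ‖∑ a : Fin (2 * r), if a ≠ bar c then
              Complex.exp ((1 / 2 - ν + I / h) * ℓ a c ((t0 : ℝ) : ℂ)) *
                u (moebiusC (S.γ a) ((t0 : ℝ) : ℂ)) else 0‖ := by rw [← hfeq]
          _ ≤ rho (S.g v) x ^ e * ∑ a : Fin (2 * r), ‖if a ≠ bar c then
              Complex.exp ((1 / 2 - ν + I / h) * ℓ a c ((t0 : ℝ) : ℂ)) *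
                u (moebiusC (S.γ a) ((t0 : ℝ) : ℂ)) else 0‖ :=
              mul_le_mul_of_nonneg_left (norm_sum_le _ _) (Real.rpow_nonneg hrpos.le _)
          _ = ∑ a : Fin (2 * r), rho (S.g v) x ^ e * ‖if a ≠ bar c then
              Complex.exp ((1 / 2 - ν + I / h) * ℓ a c ((t0 : ℝ) : ℂ)) *
                u (moebiusC (S.γ a) ((t0 : ℝ) : ℂ)) else 0‖ := Finset.mul_sum _ _ _
          _ ≤ ∑ a : Fin (2 * r), (if a ≠ bar c then
              C * ∑ w ∈ Z.filter (fun w => (a :: v) <:+ barWord w),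
                sSup ((fun t : ℝ => ‖u ((t : ℝ) : ℂ)‖) '' S.iprime (barWord w)) else 0) :=
              Finset.sum_le_sum fun a _ => hterm a
          _ = ∑ a ∈ Finset.univ.filter (fun a => a ≠ bar c),
              C * ∑ w ∈ Z.filter (fun w => (a :: v) <:+ barWord w),
                sSup ((fun t : ℝ => ‖u ((t : ℝ) : ℂ)‖) '' S.iprime (barWord w)) :=
              (Finset.sum_filter _ _).symm
          _ = C * ∑ a ∈ Finset.univ.filter (fun a => a ≠ bar c),
              ∑ w ∈ Z.filter (fun w => (a :: v) <:+ barWord w),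
                sSup ((fun t : ℝ => ‖u ((t : ℝ) : ℂ)‖) '' S.iprime (barWord w)) :=
              (Finset.mul_sum _ _ _).symm
          _ = C * ∑ w ∈ (Finset.univ.filter (fun a => a ≠ bar c)).biUnion
                (fun a => Z.filter (fun w => (a :: v) <:+ barWord w)),
                sSup ((fun t : ℝ => ‖u ((t : ℝ) : ℂ)‖) '' S.iprime (barWord w)) := by
              congr 1
              refine (Finset.sum_biUnion ?_).symm
              intro a _ a' _ hne
              simp only [Function.onFun]
              rw [Finset.disjoint_left]
              intro w hw1 hw2
              have h1 := (Finset.mem_filter.mp hw1).2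
              have h2 := (Finset.mem_filter.mp hw2).2
              have : (a :: v) = (a' :: v) :=
                suffix_eq_of_length h1 h2 (by simp)
              exact hne (by injection this)
          _ ≤ C * ∑ w ∈ Z.filter (fun w => v <:+ barWord w),
                sSup ((fun t : ℝ => ‖u ((t : ℝ) : ℂ)‖) '' S.iprime (barWord w)) := by
              refine mul_le_mul_of_nonneg_left ?_ hC0
              refine Finset.sum_le_sum_of_subset_of_nonneg ?_ ?_
              · intro w hw'
                obtain ⟨a, -, hwa⟩ := Finset.mem_biUnion.mp hw'
                obtain ⟨hwZ, hsufa⟩ := Finset.mem_filter.mp hwa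
                refine Finset.mem_filter.mpr ⟨hwZ, ?_⟩
                exact List.IsSuffix.trans (⟨[a], rfl⟩ : v <:+ a :: v) hsufa
              · intro w hwZ _
                exact hsup0 w (Finset.mem_filter.mp hwZ).1
  -- conclusion
  have hwordb : IsWord (([] : List (Fin (2 * r))) ++ [b]) := by
    simp [IsWord, List.Chain']
  have hfin := claim N [] hwordb
    (by
      intro q hq hqne
      exact absurd (List.suffix_nil.mp hq) hqne)
    (by simp)
  rw [g_nil, rho_one, moebiusR_one, Real.one_rpow, one_mul] at hfin
  have hfilter : Z.filter (fun w => ([] : List (Fin (2 * r))) <:+ barWord w) = Z :=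
    Finset.filter_true_of_mem fun w _ => List.nil_suffix
  rwa [hfilter] at hfin
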